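/- Let α ≥ 0, let G = α·1μᵀ − (α+1)·I where μ is a probability vector (so that ∇h(μ)ᵀ = G), and let U be a symmetric matrix with U1 = 0 and 1ᵀU = 0. Then ∫₀^∞ e^{(Gᵀ+I/2)t} U e^{(G+I/2)t} dt = U/(2α+1). -/

import Mathlib

open Matrix

section Aux

variable {A : Type*} [NormedRing A] [NormedAlgebra ℝ A] [CompleteSpace A]

lemma aux_mul_pow (U x : A) (c : ℝ) (h : U * x = c • U) (k : ℕ) :
    U * x ^ k = c ^ k • U := by
  induction k with
  | zero => simp
  | succ k ih =>
    rw [pow_succ, ← mul_assoc, ih, smul_mul_assoc, h, smul_smul, pow_succ]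

lemma aux_pow_mul (U x : A) (c : ℝ) (h : x * U = c • U) (k : ℕ) :
    x ^ k * U = c ^ k • U := by
  induction k with
  | zero => simp
  | succ k ih =>
    rw [pow_succ, mul_assoc, h, mul_smul_comm, ih, smul_smul, mul_comm, ← pow_succ]

lemma aux_mul_exp (U x : A) (c : ℝ) (h : U * x = c • U) :
    U * NormedSpace.exp x = Real.exp c • U := by
  rw [NormedSpace.exp_eq_tsum ℝ]
  rw [← (NormedSpace.expSeries_summable' (𝕂 := ℝ) x).tsum_mul_left U]
  have : ∀ k : ℕ, U * (((k.factorial : ℝ))⁻¹ • x ^ k) = (((k.factorial : ℝ))⁻¹ * c ^ k) • U := by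
    intro k
    rw [mul_smul_comm, aux_mul_pow U x c h, smul_smul]
  simp_rw [this]
  rw [Summable.tsum_smul_const]
  · congr 1
    rw [Real.exp_eq_exp_ℝ, NormedSpace.exp_eq_tsum ℝ]
    simp [smul_eq_mul]
  · have := NormedSpace.expSeries_summable' (𝕂 := ℝ) c
    simpa [smul_eq_mul] using this

lemma aux_exp_mul (U x : A) (c : ℝ) (h : x * U = c • U) :
    NormedSpace.exp x * U = Real.exp c • U := by
  rw [NormedSpace.exp_eq_tsum ℝ]
  rw [← (NormedSpace.expSeries_summable' (𝕂 := ℝ) x).tsum_mul_right U]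
  have : ∀ k : ℕ, (((k.factorial : ℝ))⁻¹ • x ^ k) * U = (((k.factorial : ℝ))⁻¹ * c ^ k) • U := by
    intro k
    rw [smul_mul_assoc, aux_pow_mul U x c h, smul_smul]
  simp_rw [this]
  rw [Summable.tsum_smul_const]
  · congr 1
    rw [Real.exp_eq_exp_ℝ, NormedSpace.exp_eq_tsum ℝ]
    simp [smul_eq_mul]
  · have := NormedSpace.expSeries_summable' (𝕂 := ℝ) c
    simpa [smul_eq_mul] using this

end Aux

theorem stmt_11 {n : ℕ} (α : ℝ) (hα : 0 ≤ α) (μ : Fin n → ℝ)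
    (hμpos : ∀ i, 0 < μ i) (hμsum : ∑ i, μ i = 1)
    (G : Matrix (Fin n) (Fin n) ℝ)
    (hG : G = α • Matrix.vecMulVec (1 : Fin n → ℝ) μ - (α + 1) • 1)
    (U : Matrix (Fin n) (Fin n) ℝ) (hUsym : U.IsSymm)
    (hU1 : U *ᵥ (1 : Fin n → ℝ) = 0) (h1U : (1 : Fin n → ℝ) ᵥ* U = 0) :
    ∀ i j : Fin n,
      (∫ t in Set.Ioi (0 : ℝ),
        (NormedSpace.exp (t • (Gᵀ + (1 / 2 : ℝ) • 1)) * U *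
          NormedSpace.exp (t • (G + (1 / 2 : ℝ) • 1))) i j)
      = ((1 / (2 * α + 1)) • U) i j := by
  letI : SeminormedRing (Matrix (Fin n) (Fin n) ℝ) := Matrix.linftyOpSemiNormedRing
  letI : NormedRing (Matrix (Fin n) (Fin n) ℝ) := Matrix.linftyOpNormedRing
  letI : NormedAlgebra ℝ (Matrix (Fin n) (Fin n) ℝ) := Matrix.linftyOpNormedAlgebra
  -- Key products with the rank-one projection vanish
  have hUP : U * Matrix.vecMulVec (1 : Fin n → ℝ) μ = 0 := by
    ext i j
    simp only [Matrix.mul_apply, Matrix.vecMulVec_apply, Pi.one_apply, one_mul,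
      Matrix.zero_apply]
    rw [← Finset.sum_mul]
    have : ∑ k, U i k = 0 := by
      have := congrFun hU1 i
      simpa [Matrix.mulVec, dotProduct] using this
    rw [this, zero_mul]
  have hPU : (Matrix.vecMulVec (1 : Fin n → ℝ) μ)ᵀ * U = 0 := by
    ext i j
    simp only [Matrix.mul_apply, Matrix.transpose_apply, Matrix.vecMulVec_apply,
      Pi.one_apply, one_mul, Matrix.zero_apply]
    rw [← Finset.mul_sum]
    have : ∑ k, U k j = 0 := by
      have := congrFun h1U j
      simpa [Matrix.vecMul, dotProduct] using this
    rw [this, mul_zero]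
  set c : ℝ := -(α + 1 / 2) with hc
  have hUG : U * (G + (1 / 2 : ℝ) • 1) = c • U := by
    rw [hG]
    rw [mul_add, mul_sub, Matrix.mul_smul, hUP, smul_zero, Matrix.mul_smul,
      Matrix.mul_smul]
    simp only [mul_one, hc]
    module
  have hGU : (Gᵀ + (1 / 2 : ℝ) • 1) * U = c • U := by
    rw [hG]
    rw [Matrix.transpose_sub, Matrix.transpose_smul, Matrix.transpose_smul,
      Matrix.transpose_one]
    rw [add_mul, sub_mul, Matrix.smul_mul, hPU, smul_zero, Matrix.smul_mul,
      Matrix.smul_mul]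
    simp only [one_mul, hc]
    module
  -- hence the integrand is exp(-(2α+1)t) • U
  have key : ∀ t : ℝ,
      NormedSpace.exp (t • (Gᵀ + (1 / 2 : ℝ) • 1)) * U *
          NormedSpace.exp (t • (G + (1 / 2 : ℝ) • 1))
        = Real.exp (-((2 * α + 1) * t)) • U := by
    intro t
    have h1 : (t • (Gᵀ + (1 / 2 : ℝ) • 1)) * U = (t * c) • U := by
      rw [Matrix.smul_mul, hGU, smul_smul]
    have h2 : U * (t • (G + (1 / 2 : ℝ) • 1)) = (t * c) • U := by
      rw [Matrix.mul_smul, hUG, smul_smul]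
    erw [aux_exp_mul U _ (t * c) h1, Matrix.smul_mul,
      aux_mul_exp U _ (t * c) h2, smul_smul, ← Real.exp_add]
    congr 2
    rw [hc]; ring
  intro i j
  have hint : (∫ t in Set.Ioi (0 : ℝ),
      (NormedSpace.exp (t • (Gᵀ + (1 / 2 : ℝ) • 1)) * U *
        NormedSpace.exp (t • (G + (1 / 2 : ℝ) • 1))) i j)
      = ∫ t in Set.Ioi (0 : ℝ), Real.exp (-((2 * α + 1) * t)) * U i j := by
    congr 1
    ext t
    rw [key t]
    simp [Matrix.smul_apply, smul_eq_mul]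
  rw [hint]
  have hb : (0 : ℝ) < 2 * α + 1 := by linarith
  rw [MeasureTheory.integral_mul_const]
  have : (∫ t in Set.Ioi (0 : ℝ), Real.exp (-((2 * α + 1) * t))) = 1 / (2 * α + 1) := by
    have := MeasureTheory.integral_comp_mul_left_Ioi (fun x => Real.exp (-x)) 0 hb
    simp only [mul_zero] at this
    rw [integral_exp_neg_Ioi 0] at this
    have h2 : (∫ t in Set.Ioi (0 : ℝ), Real.exp (-((2 * α + 1) * t)))
        = (2 * α + 1)⁻¹ • Real.exp (-0) := this.symm ▸ rfl
    rw [h2]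
    simp [smul_eq_mul, one_div]
  rw [this]
  simp [Matrix.smul_apply, smul_eq_mul]
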